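/- arXiv:1807.08647 — 2 statements merged into one kernel-verified Lean document; each statement's English description precedes it below -/
import Mathlib

section
/- For nonnegative (almost surely positive, integrable with integrable logarithm) random variables Ψ₁,…,Ψ_L, the expectation E[log₂(1 + (∑ᵢ 1/√Ψᵢ)²)] is strictly greater than log₂((∑ᵢ 1/√(E[Ψᵢ]))²). -/
open MeasureTheory Real

private lemma pos_meas_support {Ω : Type*} [MeasureSpace Ω] {μ : Measure Ω}
    [IsProbabilityMeasure μ] {f : Ω → ℝ} (h : ∀ᵐ ω ∂μ, 0 < f ω) :
    0 < μ (Function.support f) := by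
  rcases (zero_le : (0:ENNReal) ≤ μ (Function.support f)).eq_or_lt with h0 | h0
  · exfalso
    have hz : ∀ᵐ ω ∂μ, f ω = 0 := by
      rw [MeasureTheory.ae_iff]
      simpa [Function.support] using h0.symm
    haveI : (ae μ).NeBot := ae_neBot.2 (IsProbabilityMeasure.ne_zero μ)
    obtain ⟨ω, h1, h2⟩ := (h.and hz).exists
    exact absurd h2 h1.ne'
  · exact h0

private lemma sqrt_eq_exp_aux {m : ℝ} (hm : 0 < m) : Real.sqrt m = Real.exp (Real.log m / 2) := by
  have h : Real.exp (Real.log m / 2) ^ 2 = m := by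
    rw [← Real.exp_nat_mul, show ((2:ℕ):ℝ) * (Real.log m / 2) = Real.log m by push_cast; ring,
      Real.exp_log hm]
  nth_rewrite 1 [← h]
  exact Real.sqrt_sq (Real.exp_pos _).le

private lemma one_div_sqrt_eq {m : ℝ} (hm : 0 < m) :
    1 / Real.sqrt m = Real.exp (-(Real.log m) / 2) := by
  rw [sqrt_eq_exp_aux hm, one_div, ← Real.exp_neg]
  ring_nf

/-- Lemma 1: for a.s. positive integrable random variables `Ψ i` with integrable
logarithm, `E[log₂(1 + (∑ᵢ 1/√Ψᵢ)²)] > log₂((∑ᵢ 1/√(E[Ψᵢ]))²)`. -/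
theorem stmt0 {Ω : Type*} [MeasureSpace Ω] (μ : Measure Ω) [IsProbabilityMeasure μ]
    (L : ℕ) (hL : 0 < L) (Ψ : Fin L → Ω → ℝ)
    (hpos : ∀ i, ∀ᵐ ω ∂μ, 0 < Ψ i ω)
    (hint : ∀ i, Integrable (Ψ i) μ)
    (hlog : ∀ i, Integrable (fun ω => Real.log (Ψ i ω)) μ)
    (hintLHS : Integrable
      (fun ω => Real.logb 2 (1 + (∑ i, 1 / Real.sqrt (Ψ i ω)) ^ 2)) μ) :
    (∫ ω, Real.logb 2 (1 + (∑ i, 1 / Real.sqrt (Ψ i ω)) ^ 2) ∂μ) >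
      Real.logb 2 ((∑ i, 1 / Real.sqrt (∫ ω, Ψ i ω ∂μ)) ^ 2) := by
  haveI : Nonempty (Fin L) := Fin.pos_iff_nonempty.mp hL
  set S : Ω → ℝ := fun ω => ∑ i, 1 / Real.sqrt (Ψ i ω) with hSdef
  set G : Ω → ℝ := fun ω => Real.log (1 + S ω ^ 2) with hGdef
  set E : Fin L → ℝ := fun i => ∫ ω, Ψ i ω ∂μ with hEdef
  set l : Fin L → ℝ := fun i => ∫ ω, Real.log (Ψ i ω) ∂μ with hldef
  set c : Fin L → ℝ := fun i => Real.exp (-(l i) / 2) with hcdef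
  set C : ℝ := ∑ i, c i with hCdef
  have haeall : ∀ᵐ ω ∂μ, ∀ i, 0 < Ψ i ω := ae_all_iff.2 hpos
  have hlog2 : (0:ℝ) < Real.log 2 := Real.log_pos one_lt_two
  -- E i > 0
  have hE : ∀ i, 0 < E i := by
    intro i
    exact (integral_pos_iff_support_of_nonneg_ae ((hpos i).mono fun ω h => h.le)
      (hint i)).2 (pos_meas_support (hpos i))
  -- Jensen for log : l i ≤ log (E i)
  have hJ : ∀ i, l i ≤ Real.log (E i) := by
    intro i
    have hsub : Integrable (fun ω => (Ψ i ω - E i) / E i) μ := by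
      exact ((hint i).sub (integrable_const (E i))).div_const (E i)
    have hmono : l i ≤ ∫ ω, (Real.log (E i) + (Ψ i ω - E i) / E i) ∂μ := by
      apply integral_mono_ae (hlog i)
      · exact (integrable_const _).add hsub
      · filter_upwards [hpos i] with ω hω
        have h1 : 0 < Ψ i ω / E i := div_pos hω (hE i)
        have h3 := Real.log_le_sub_one_of_pos h1
        rw [Real.log_div hω.ne' (hE i).ne'] at h3
        have h4 : (Ψ i ω - E i) / E i = Ψ i ω / E i - 1 := by
          rw [sub_div, div_self (hE i).ne']
        linarith
    have hcalc : ∫ ω, (Real.log (E i) + (Ψ i ω - E i) / E i) ∂μ = Real.log (E i) := by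
      rw [integral_add (integrable_const _) hsub,
        integral_const, integral_div, integral_sub (hint i) (integrable_const _), integral_const]
      have huniv : μ.real Set.univ = 1 := by simp
      rw [huniv, one_smul, one_smul]
      rw [show (∫ a, Ψ i a ∂μ) = E i from rfl, sub_self, zero_div, add_zero]
    rwa [hcalc] at hmono
  -- C bounds
  have hcpos : ∀ i, 0 < c i := fun i => Real.exp_pos _
  have hCpos : 0 < C := Finset.sum_pos (fun i _ => hcpos i) Finset.univ_nonempty
  have hXle : ∀ i, 1 / Real.sqrt (E i) ≤ c i := by
    intro i
    rw [one_div_sqrt_eq (hE i)]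
    exact Real.exp_le_exp.2 (by linarith [hJ i])
  have hXpos : (0:ℝ) < ∑ i, 1 / Real.sqrt (E i) :=
    Finset.sum_pos (fun i _ => one_div_pos.2 (Real.sqrt_pos.2 (hE i))) Finset.univ_nonempty
  have hXC : ∑ i, 1 / Real.sqrt (E i) ≤ C :=
    Finset.sum_le_sum fun i _ => hXle i
  -- pointwise facts
  have hSpos : ∀ᵐ ω ∂μ, 0 < S ω := by
    filter_upwards [haeall] with ω hω
    exact Finset.sum_pos (fun i _ => one_div_pos.2 (Real.sqrt_pos.2 (hω i))) Finset.univ_nonempty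
  -- key pointwise Jensen (finite, weighted AM-GM)
  have hkey : ∀ᵐ ω ∂μ, Real.log C + ∑ i, (c i / C) * (l i / 2 - Real.log (Ψ i ω) / 2)
      ≤ Real.log (S ω) := by
    filter_upwards [haeall] with ω hω
    set w : Fin L → ℝ := fun i => c i / C with hwdef
    set z : Fin L → ℝ := fun i => (1 / Real.sqrt (Ψ i ω)) / c i with hzdef
    have hw0 : ∀ i ∈ Finset.univ, (0:ℝ) ≤ w i := fun i _ => (div_pos (hcpos i) hCpos).le
    have hw1 : ∑ i, w i = 1 := by
      rw [hwdef]; rw [← Finset.sum_div]; exact div_self hCpos.ne'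
    have hz0 : ∀ i ∈ Finset.univ, z i ∈ Set.Ioi (0:ℝ) := fun i _ => by
      simp only [hzdef, Set.mem_Ioi]
      exact div_pos (one_div_pos.2 (Real.sqrt_pos.2 (hω i))) (hcpos i)
    have hjen := (strictConcaveOn_log_Ioi.concaveOn).le_map_sum hw0 hw1 hz0
    have hSz : S ω = C * ∑ i, w i • z i := by
      rw [Finset.mul_sum]
      apply Finset.sum_congr rfl
      intro i _
      simp only [hwdef, hzdef, smul_eq_mul]
      have h1 : Real.sqrt (Ψ i ω) ≠ 0 := (Real.sqrt_pos.2 (hω i)).ne'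
      have h2 : c i ≠ 0 := (hcpos i).ne'
      have h3 : C ≠ 0 := hCpos.ne'
      field_simp
    have hlogS : Real.log (S ω) = Real.log C + Real.log (∑ i, w i • z i) := by
      rw [hSz, Real.log_mul hCpos.ne']
      have : (0:ℝ) < ∑ i, w i • z i := by
        apply Finset.sum_pos (fun i _ => ?_) Finset.univ_nonempty
        exact mul_pos (div_pos (hcpos i) hCpos) (hz0 i (Finset.mem_univ i))
      exact this.ne'
    have hlogz : ∀ i, Real.log (z i) = l i / 2 - Real.log (Ψ i ω) / 2 := by
      intro i
      rw [hzdef]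
      rw [Real.log_div (one_div_pos.2 (Real.sqrt_pos.2 (hω i))).ne' (hcpos i).ne',
        Real.log_div one_ne_zero (Real.sqrt_ne_zero'.2 (hω i)),
        Real.log_sqrt (hω i).le, hcdef, Real.log_exp, Real.log_one]
      ring
    rw [hlogS]
    have : ∑ i, w i • Real.log (z i) = ∑ i, (c i / C) * (l i / 2 - Real.log (Ψ i ω) / 2) := by
      apply Finset.sum_congr rfl
      intro i _
      rw [smul_eq_mul, hlogz i, hwdef]
    linarith [le_trans (le_of_eq this.symm) hjen]
  -- integrability of G
  have hGint : Integrable G μ := by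
    have : G = fun ω => Real.logb 2 (1 + (∑ i, 1 / Real.sqrt (Ψ i ω)) ^ 2) * Real.log 2 := by
      funext ω
      rw [hGdef]
      simp only [hSdef, Real.logb, div_mul_cancel₀ _ hlog2.ne']
    rw [this]
    exact hintLHS.mul_const _
  -- measurability of log ∘ S
  have hSmeas : AEMeasurable S μ := by
    apply Finset.aemeasurable_fun_sum
    intro i _
    have h1 : AEMeasurable (Ψ i) μ := (hint i).1.aemeasurable
    simpa [one_div, Function.comp_def] using (Real.continuous_sqrt.measurable.comp_aemeasurable h1)
  have hlogSmeas : AEMeasurable (fun ω => Real.log (S ω)) μ :=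
    Real.measurable_log.comp_aemeasurable hSmeas
  -- sandwich bounds
  set i0 : Fin L := Classical.arbitrary (Fin L)
  have hbounds : ∀ᵐ ω ∂μ, (-(Real.log (Ψ i0 ω)) / 2 ≤ Real.log (S ω) ∧
      Real.log (S ω) ≤ G ω / 2) := by
    filter_upwards [haeall] with ω hω
    have hS0 : 0 < S ω :=
      Finset.sum_pos (fun i _ => one_div_pos.2 (Real.sqrt_pos.2 (hω i))) Finset.univ_nonempty
    have hterm : 1 / Real.sqrt (Ψ i0 ω) ≤ S ω :=
      Finset.single_le_sum (f := fun i => 1 / Real.sqrt (Ψ i ω))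
        (fun i _ => (one_div_pos.2 (Real.sqrt_pos.2 (hω i))).le) (Finset.mem_univ i0)
    constructor
    · have := Real.log_le_log (one_div_pos.2 (Real.sqrt_pos.2 (hω i0))) hterm
      rw [Real.log_div one_ne_zero (Real.sqrt_ne_zero'.2 (hω i0)),
        Real.log_sqrt (hω i0).le] at this
      linarith [this, Real.log_one]
    · have h1 : Real.log (S ω ^ 2) ≤ Real.log (1 + S ω ^ 2) :=
        Real.log_le_log (by positivity) (by linarith)
      rw [Real.log_pow] at h1
      simp only [hGdef]
      push_cast at h1
      linarith
  have hlogSint : Integrable (fun ω => Real.log (S ω)) μ := by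
    apply Integrable.mono' (((hGint.div_const 2).abs).add
      (((hlog i0).div_const 2).abs)) hlogSmeas.aestronglyMeasurable
    filter_upwards [hbounds] with ω hω
    simp only [Pi.add_apply]
    rw [Real.norm_eq_abs, abs_le]
    have h2 := abs_nonneg (G ω / 2)
    have h3 := abs_nonneg (Real.log (Ψ i0 ω) / 2)
    have h4 := le_abs_self (Real.log (Ψ i0 ω) / 2)
    have h5 := le_abs_self (G ω / 2)
    have h6 := hω.1
    have h7 := hω.2
    rw [neg_div] at h6
    constructor <;> linarith
  -- integral of log S ≥ log C
  have hIS : Real.log C ≤ ∫ ω, Real.log (S ω) ∂μ := by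
    have hterm : ∀ i, Integrable (fun ω => (c i / C) * (l i / 2 - Real.log (Ψ i ω) / 2)) μ := by
      intro i
      exact (((integrable_const (l i / 2)).sub ((hlog i).div_const 2)).const_mul _)
    have hsum : Integrable (fun ω => ∑ i, (c i / C) * (l i / 2 - Real.log (Ψ i ω) / 2)) μ :=
      integrable_finset_sum _ fun i _ => hterm i
    have hFint : Integrable (fun ω => Real.log C +
        ∑ i, (c i / C) * (l i / 2 - Real.log (Ψ i ω) / 2)) μ := (integrable_const _).add hsum
    have := integral_mono_ae hFint hlogSint hkey
    have hcalc : ∫ ω, (Real.log C + ∑ i, (c i / C) * (l i / 2 - Real.log (Ψ i ω) / 2)) ∂μ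
        = Real.log C := by
      rw [integral_add (integrable_const _) hsum,
        integral_const, integral_finset_sum _ (fun i _ => hterm i)]
      have : ∀ i ∈ Finset.univ, (∫ ω, (c i / C) * (l i / 2 - Real.log (Ψ i ω) / 2) ∂μ) = 0 := by
        intro i _
        rw [integral_const_mul, integral_sub (integrable_const _) ((hlog i).div_const 2),
          integral_const, integral_div]
        simp [hldef]
      rw [Finset.sum_congr rfl this]
      simp
    rwa [hcalc] at this
  -- strict part
  set D : Ω → ℝ := fun ω => G ω - 2 * Real.log (S ω) with hDdef
  have hDint : Integrable D μ := hGint.sub (hlogSint.const_mul 2)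
  have hDpos : ∀ᵐ ω ∂μ, 0 < D ω := by
    filter_upwards [hSpos] with ω hω
    have h1 : Real.log (S ω ^ 2) < Real.log (1 + S ω ^ 2) :=
      Real.log_lt_log (by positivity) (by linarith)
    rw [Real.log_pow] at h1
    simp only [hDdef, hGdef]
    push_cast at h1
    linarith
  have hDposInt : 0 < ∫ ω, D ω ∂μ :=
    (integral_pos_iff_support_of_nonneg_ae (hDpos.mono fun ω h => h.le) hDint).2
      (pos_meas_support hDpos)
  -- assemble
  have hGval : ∫ ω, G ω ∂μ = (∫ ω, D ω ∂μ) + 2 * ∫ ω, Real.log (S ω) ∂μ := by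
    rw [← integral_const_mul, ← integral_add hDint (hlogSint.const_mul 2)]
    simp [hDdef]
  have hfinal : Real.log ((∑ i, 1 / Real.sqrt (E i)) ^ 2) < ∫ ω, G ω ∂μ := by
    rw [hGval, Real.log_pow]
    push_cast
    have h2 : Real.log (∑ i, 1 / Real.sqrt (E i)) ≤ Real.log C := Real.log_le_log hXpos hXC
    nlinarith [hIS, hDposInt, h2]
  -- convert to logb
  have hIeq : ∫ ω, G ω ∂μ =
      (∫ ω, Real.logb 2 (1 + (∑ i, 1 / Real.sqrt (Ψ i ω)) ^ 2) ∂μ) * Real.log 2 := by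
    rw [← integral_mul_const]
    congr 1
    funext ω
    simp only [hGdef, hSdef, Real.logb, div_mul_cancel₀ _ hlog2.ne']
  rw [hIeq] at hfinal
  rw [gt_iff_lt, Real.logb, div_lt_iff₀ hlog2]
  exact hfinal
end

section
/- Let ζ₁,…,ζ_L be strictly positive random variables, each with finite mean, and let c > 0. Then E[log₂(1 + c·(∑ᵢ 1/√ζᵢ)²)] > log₂(c·(∑ᵢ 1/√(E ζᵢ))²), provided the left-hand expectation exists and E[ln ζᵢ] is finite for each i. -/
open MeasureTheory Real

lemma aux_weighted {n : ℕ} (hn : 0 < n) (w x : Fin n → ℝ)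
    (hw : ∀ i, 0 < w i) (hx : ∀ i, 0 < x i) (hws : ∑ i, w i = 1) :
    ∑ i, w i * (Real.log (x i) - Real.log (w i)) ≤ Real.log (∑ i, x i) := by
  have hne : (Finset.univ : Finset (Fin n)).Nonempty := by
    simpa [Finset.univ_nonempty_iff] using Fin.pos_iff_nonempty.mp hn
  have hS : 0 < ∑ i, x i := Finset.sum_pos (fun i _ => hx i) hne
  set S := ∑ i, x i with hSdef
  have key : ∀ i : Fin n, w i * (Real.log (x i) - Real.log (w i)) ≤
      x i / S - w i + w i * Real.log S := by
    intro i
    have hwS : 0 < w i * S := mul_pos (hw i) hS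
    have h2 : Real.log (x i / (w i * S)) ≤ x i / (w i * S) - 1 :=
      Real.log_le_sub_one_of_pos (div_pos (hx i) hwS)
    rw [Real.log_div (hx i).ne' hwS.ne',
      Real.log_mul (hw i).ne' hS.ne'] at h2
    have h3 := mul_le_mul_of_nonneg_left h2 (hw i).le
    have hq : w i * (x i / (w i * S)) = x i / S := by
      field_simp
      exact mul_div_cancel_left₀ _ (hw i).ne'
    nlinarith [h3, hq]
  calc ∑ i, w i * (Real.log (x i) - Real.log (w i))
      ≤ ∑ i, (x i / S - w i + w i * Real.log S) :=
        Finset.sum_le_sum (fun i _ => key i)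
    _ = (∑ i, x i) / S - (∑ i, w i) + (∑ i, w i) * Real.log S := by
        rw [Finset.sum_add_distrib, Finset.sum_sub_distrib, ← Finset.sum_div,
          ← Finset.sum_mul]
    _ = Real.log S := by
        rw [hws, ← hSdef, div_self hS.ne']; ring

lemma aux_int_pos {Ω : Type*} [MeasureSpace Ω] (μ : Measure Ω) [IsProbabilityMeasure μ]
    (f : Ω → ℝ) (h : ∀ᵐ ω ∂μ, 0 < f ω) (hi : Integrable f μ) :
    0 < ∫ ω, f ω ∂μ := by
  rw [integral_pos_iff_support_of_nonneg_ae (h.mono fun ω hω => hω.le) hi]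
  have hc : μ (Function.support f)ᶜ = 0 := by
    have h2 : ∀ᵐ ω ∂μ, ω ∈ Function.support f :=
      h.mono fun ω hω => by simpa [Function.mem_support] using hω.ne'
    have he : (Function.support f)ᶜ = {a | f a = 0} := by
      ext a; simp [Function.support]
    rw [he]
    simpa [ae_iff] using h2
  have h3 : μ Set.univ ≤ μ (Function.support f) + μ (Function.support f)ᶜ := by
    rw [← Set.union_compl_self (Function.support f)]
    exact measure_union_le _ _
  rw [measure_univ, hc, add_zero] at h3
  exact lt_of_lt_of_le (by norm_num) h3

lemma aux_log_le {Ω : Type*} [MeasureSpace Ω] (μ : Measure Ω) [IsProbabilityMeasure μ]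
    (f : Ω → ℝ) (hpos : ∀ᵐ ω ∂μ, 0 < f ω) (hint : Integrable f μ)
    (hlog : Integrable (fun ω => Real.log (f ω)) μ) :
    ∫ ω, Real.log (f ω) ∂μ ≤ Real.log (∫ ω, f ω ∂μ) := by
  have hm : 0 < ∫ ω, f ω ∂μ := aux_int_pos μ f hpos hint
  set m := ∫ ω, f ω ∂μ with hmdef
  have key : ∀ᵐ ω ∂μ, Real.log (f ω) ≤ f ω / m - 1 + Real.log m := by
    refine hpos.mono fun ω h => ?_
    have h2 := Real.log_le_sub_one_of_pos (show 0 < f ω / m by positivity)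
    rw [Real.log_div h.ne' hm.ne'] at h2
    linarith
  have he : (fun ω => f ω / m - 1 + Real.log m) = fun ω => f ω / m + (Real.log m - 1) := by
    funext ω; ring
  have hint2 : Integrable (fun ω => f ω / m - 1 + Real.log m) μ := by
    rw [he]; exact (hint.div_const m).add (integrable_const _)
  calc ∫ ω, Real.log (f ω) ∂μ ≤ ∫ ω, (f ω / m - 1 + Real.log m) ∂μ :=
        integral_mono_ae hlog hint2 key
    _ = Real.log m := by
        rw [he, integral_add (hint.div_const m) (integrable_const _), integral_div]
        simp [← hmdef, div_self hm.ne']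

/-- Lemma 1 with SNR scaling constant `c = P_R/N₀`: for strictly positive
integrable random variables `ζᵢ` with integrable logarithm,
`E[log₂(1 + c·(∑ᵢ 1/√ζᵢ)²)] > log₂(c·(∑ᵢ 1/√(E ζᵢ))²)`. -/
theorem stmt14 {Ω : Type*} [MeasureSpace Ω] (μ : Measure Ω) [IsProbabilityMeasure μ]
    (L : ℕ) (hL : 0 < L) (c : ℝ) (hc : 0 < c) (ζ : Fin L → Ω → ℝ)
    (hpos : ∀ i, ∀ᵐ ω ∂μ, 0 < ζ i ω)
    (hint : ∀ i, Integrable (ζ i) μ)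
    (hlog : ∀ i, Integrable (fun ω => Real.log (ζ i ω)) μ)
    (hintLHS : Integrable
      (fun ω => Real.logb 2 (1 + c * (∑ i, 1 / Real.sqrt (ζ i ω)) ^ 2)) μ) :
    (∫ ω, Real.logb 2 (1 + c * (∑ i, 1 / Real.sqrt (ζ i ω)) ^ 2) ∂μ) >
      Real.logb 2 (c * (∑ i, 1 / Real.sqrt (∫ ω, ζ i ω ∂μ)) ^ 2) := by
  have hne : (Finset.univ : Finset (Fin L)).Nonempty := by
    simpa [Finset.univ_nonempty_iff] using Fin.pos_iff_nonempty.mp hL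
  have hlog2 : 0 < Real.log 2 := Real.log_pos (by norm_num)
  -- means and their positivity
  have hm : ∀ i, 0 < ∫ ω, ζ i ω ∂μ := fun i => aux_int_pos μ (ζ i) (hpos i) (hint i)
  have hmlog : ∀ i, ∫ ω, Real.log (ζ i ω) ∂μ ≤ Real.log (∫ ω, ζ i ω ∂μ) :=
    fun i => aux_log_le μ (ζ i) (hpos i) (hint i) (hlog i)
  -- weights
  set T : ℝ := ∑ i, 1 / Real.sqrt (∫ ω, ζ i ω ∂μ) with hTdef
  have hT : 0 < T :=
    Finset.sum_pos (fun i _ => one_div_pos.mpr (Real.sqrt_pos.mpr (hm i))) hne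
  set w : Fin L → ℝ := fun i => (1 / Real.sqrt (∫ ω, ζ i ω ∂μ)) / T with hwdef
  have hw : ∀ i, 0 < w i :=
    fun i => div_pos (one_div_pos.mpr (Real.sqrt_pos.mpr (hm i))) hT
  have hws : ∑ i, w i = 1 := by
    rw [hwdef]
    rw [← Finset.sum_div, ← hTdef, div_self hT.ne']
  -- abbreviations
  set S : Ω → ℝ := fun ω => ∑ i, 1 / Real.sqrt (ζ i ω) with hSdef
  set F : Ω → ℝ := fun ω => Real.logb 2 (1 + c * (S ω) ^ 2) with hFdef
  set G : Ω → ℝ := fun ω => Real.logb 2 (c * (S ω) ^ 2) with hGdef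
  set g : Ω → ℝ := fun ω => ∑ i, w i * (-(1/2) * Real.log (ζ i ω) - Real.log (w i)) with hgdef
  set glow : Ω → ℝ := fun ω => (Real.log c + 2 * g ω) / Real.log 2 with hglowdef
  have haeS : ∀ᵐ ω ∂μ, ∀ i, 0 < ζ i ω := ae_all_iff.2 hpos
  -- pointwise facts
  have hptwise : ∀ᵐ ω ∂μ, glow ω ≤ G ω ∧ G ω < F ω := by
    refine haeS.mono fun ω h => ?_
    have hSω : 0 < S ω := Finset.sum_pos (fun i _ => by
      have := h i; positivity) hne
    have hlogS : g ω ≤ Real.log (S ω) := by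
      have := aux_weighted hL w (fun i => 1 / Real.sqrt (ζ i ω)) hw
        (fun i => by have := h i; positivity) hws
      refine le_trans (le_of_eq ?_) this
      rw [hgdef]
      refine Finset.sum_congr rfl fun i _ => ?_
      have : Real.log (1 / Real.sqrt (ζ i ω)) = -(1/2) * Real.log (ζ i ω) := by
        rw [one_div, Real.log_inv, Real.log_sqrt (h i).le]
        ring
      rw [this]
    have hGeq : G ω = (Real.log c + 2 * Real.log (S ω)) / Real.log 2 := by
      rw [hGdef]
      simp only [Real.logb]
      rw [Real.log_mul hc.ne' (by positivity), Real.log_pow]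
      norm_num
    constructor
    · rw [hGeq, hglowdef]
      exact div_le_div_of_nonneg_right (by linarith) hlog2.le
    · exact Real.logb_lt_logb (by norm_num) (by positivity) (by nlinarith)
  -- measurability of G
  have hSmeas : AEMeasurable S μ := by
    refine Finset.aemeasurable_fun_sum _ fun i _ => ?_
    exact (measurable_const.div Real.continuous_sqrt.measurable).comp_aemeasurable
      (hint i).aemeasurable
  have hGmeas : AEStronglyMeasurable G μ := by
    have hmb : Measurable fun t : ℝ => Real.logb 2 (c * t ^ 2) := by
      simp only [Real.logb]
      exact (Real.measurable_log.comp (measurable_const.mul (measurable_id.pow_const 2))).div_const _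
    exact (hmb.comp_aemeasurable hSmeas).aestronglyMeasurable
  -- integrability of glow and G
  have hgint : Integrable g μ := by
    rw [hgdef]
    refine integrable_finset_sum _ fun i _ => ?_
    exact (((hlog i).const_mul (-(1/2))).sub (integrable_const _)).const_mul (w i)
  have hglow_eq : glow = fun ω => (2 / Real.log 2) * g ω + Real.log c / Real.log 2 := by
    funext ω
    rw [hglowdef]
    field_simp
    ring
  have hglowint : Integrable glow μ := by
    rw [hglow_eq]
    exact (hgint.const_mul _).add (integrable_const _)
  have hGint : Integrable G μ :=
    integrable_of_le_of_le hGmeas (hptwise.mono fun ω h => h.1)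
      (hptwise.mono fun ω h => h.2.le) hglowint hintLHS
  -- strict gap
  have hgap : 0 < ∫ ω, (F ω - G ω) ∂μ :=
    aux_int_pos μ _ (hptwise.mono fun ω h => by linarith [h.2]) (hintLHS.sub hGint)
  have hgapeq : ∫ ω, (F ω - G ω) ∂μ = (∫ ω, F ω ∂μ) - ∫ ω, G ω ∂μ :=
    integral_sub hintLHS hGint
  -- ∫ glow ≤ ∫ G
  have hGlow : ∫ ω, glow ω ∂μ ≤ ∫ ω, G ω ∂μ :=
    integral_mono_ae hglowint hGint (hptwise.mono fun ω h => h.1)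
  -- ∫ g ≥ log T
  have hgT : Real.log T ≤ ∫ ω, g ω ∂μ := by
    have hterm_int : ∀ i : Fin L,
        Integrable (fun ω => w i * (-(1/2) * Real.log (ζ i ω) - Real.log (w i))) μ := by
      intro i
      have h1 : Integrable (fun ω => -(1/2) * Real.log (ζ i ω) - Real.log (w i)) μ :=
        ((hlog i).const_mul _).sub (integrable_const _)
      exact h1.const_mul (w i)
    have hgi : ∫ ω, g ω ∂μ = ∑ i, w i * (-(1/2) * (∫ ω, Real.log (ζ i ω) ∂μ) - Real.log (w i)) := by
      rw [hgdef, integral_finset_sum _ fun i _ => hterm_int i]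
      refine Finset.sum_congr rfl fun i _ => ?_
      rw [integral_const_mul]
      have h2 : Integrable (fun ω => -(1/2) * Real.log (ζ i ω)) μ := (hlog i).const_mul _
      rw [integral_sub h2 (integrable_const _), integral_const_mul, integral_const]
      simp
    rw [hgi]
    have hterm : ∀ i, w i * Real.log T ≤
        w i * (-(1/2) * (∫ ω, Real.log (ζ i ω) ∂μ) - Real.log (w i)) := by
      intro i
      refine mul_le_mul_of_nonneg_left ?_ (hw i).le
      have h1 : -(1/2) * Real.log (∫ ω, ζ i ω ∂μ) = Real.log (1 / Real.sqrt (∫ ω, ζ i ω ∂μ)) := by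
        rw [Real.log_div one_ne_zero (Real.sqrt_pos.mpr (hm i)).ne', Real.log_one,
          Real.log_sqrt (hm i).le]
        ring
      have h2 : (1 : ℝ) / Real.sqrt (∫ ω, ζ i ω ∂μ) = w i * T := by
        rw [hwdef]
        exact (div_mul_cancel₀ _ hT.ne').symm
      have h3 : Real.log (w i * T) = Real.log (w i) + Real.log T :=
        Real.log_mul (hw i).ne' hT.ne'
      have h4 := hmlog i
      rw [h2] at h1
      linarith
    calc Real.log T = (∑ i, w i) * Real.log T := by rw [hws, one_mul]
      _ = ∑ i, w i * Real.log T := by rw [Finset.sum_mul]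
      _ ≤ _ := Finset.sum_le_sum fun i _ => hterm i
  -- ∫ glow value
  have hglowval : ∫ ω, glow ω ∂μ = (Real.log c + 2 * ∫ ω, g ω ∂μ) / Real.log 2 := by
    rw [hglow_eq, integral_add (hgint.const_mul _) (integrable_const _),
      integral_const_mul, integral_const]
    simp only [probReal_univ, one_smul]
    field_simp
    ring
  -- RHS value
  have hRHS : Real.logb 2 (c * T ^ 2) = (Real.log c + 2 * Real.log T) / Real.log 2 := by
    simp only [Real.logb]
    rw [Real.log_mul hc.ne' (by positivity), Real.log_pow]
    norm_num
  have hfinal : Real.logb 2 (c * T ^ 2) ≤ ∫ ω, glow ω ∂μ := by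
    rw [hRHS, hglowval]
    exact div_le_div_of_nonneg_right (by linarith) hlog2.le
  show (∫ ω, F ω ∂μ) > Real.logb 2 (c * T ^ 2)
  linarith
end
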